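/- Let Y be a finite-dimensional inner product space, a > 0, b ≥ 0, and let Φ(u) = (a/2)‖u‖² + (b/4)‖u‖⁴ − Ψ(u) where Ψ is C¹. Suppose A : Y → Y satisfies, for each u, (a + b‖u‖²)⟨Au, w⟩ = ⟨Ψ'(u), w⟩ for all w ∈ Y. Then ⟨Φ'(u), u − Au⟩ = (a + b‖u‖²)‖u − Au‖² ≥ a‖u − Au‖², and ‖Φ'(u)‖ ≤ (a + b‖u‖²)‖u − Au‖ ≤ (a + b)(1 + ‖u‖²)‖u − Au‖ for all u ∈ Y. -/

import Mathlib

open scoped RealInnerProductSpace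

/-- For the auxiliary operator `A` defined by
`(a + b‖u‖²)⟪Au, w⟫ = ⟨Ψ'(u), w⟩`, one has
`⟨Φ'(u), u − Au⟩ = (a + b‖u‖²)‖u − Au‖² ≥ a‖u − Au‖²` and
`‖Φ'(u)‖ ≤ (a + b‖u‖²)‖u − Au‖ ≤ (a+b)(1+‖u‖²)‖u − Au‖`. -/
theorem stmt6 {Y : Type*} [NormedAddCommGroup Y] [InnerProductSpace ℝ Y]
    [FiniteDimensional ℝ Y] (a b : ℝ) (ha : 0 < a) (hb : 0 ≤ b)
    (Ψ Φ : Y → ℝ) (Ψ' Φ' : Y → Y →L[ℝ] ℝ)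
    (hΨ : ∀ u, HasFDerivAt Ψ (Ψ' u) u)
    (hΦdef : ∀ u, Φ u = a / 2 * ‖u‖ ^ 2 + b / 4 * ‖u‖ ^ 4 - Ψ u)
    (hΦ : ∀ u, HasFDerivAt Φ (Φ' u) u)
    (A : Y → Y)
    (hA : ∀ u w : Y, (a + b * ‖u‖ ^ 2) * ⟪A u, w⟫ = Ψ' u w) :
    ∀ u : Y,
      Φ' u (u - A u) = (a + b * ‖u‖ ^ 2) * ‖u - A u‖ ^ 2 ∧
      a * ‖u - A u‖ ^ 2 ≤ Φ' u (u - A u) ∧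
      ‖Φ' u‖ ≤ (a + b * ‖u‖ ^ 2) * ‖u - A u‖ ∧
      (a + b * ‖u‖ ^ 2) * ‖u - A u‖ ≤ (a + b) * (1 + ‖u‖ ^ 2) * ‖u - A u‖ := by
  intro u
  set c : ℝ := a + b * ‖u‖ ^ 2 with hc
  have hc0 : 0 ≤ c := by nlinarith [sq_nonneg ‖u‖]
  -- derivative of the norm parts
  have hsq : HasFDerivAt (fun x : Y => ‖x‖ ^ 2) (2 • (innerSL ℝ u)) u := by
    simpa using (hasFDerivAt_id u).norm_sq
  have h4 : HasFDerivAt (fun x : Y => (‖x‖ ^ 2) ^ 2)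
      ((‖u‖ ^ 2) • (2 • (innerSL ℝ u)) + (‖u‖ ^ 2) • (2 • (innerSL ℝ u))) u := by
    simpa [pow_two, Pi.mul_def] using hsq.mul hsq
  have hΦ2 : HasFDerivAt Φ
      ((a / 2) • (2 • (innerSL ℝ u)) + (b / 4) • ((‖u‖ ^ 2) • (2 • (innerSL ℝ u)) + (‖u‖ ^ 2) • (2 • (innerSL ℝ u)))
        - Ψ' u) u := by
    have : Φ = fun x => a / 2 * ‖x‖ ^ 2 + b / 4 * (‖x‖ ^ 2) ^ 2 - Ψ x := by
      funext x; rw [hΦdef x]; ring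
    rw [this]
    exact ((hsq.const_mul (a / 2)).add (h4.const_mul (b / 4))).sub (hΨ u)
  have huniq := (hΦ u).unique hΦ2
  have key : ∀ w : Y, Φ' u w = c * ⟪u - A u, w⟫ := by
    intro w
    have h1 : Φ' u w = a * ⟪u, w⟫ + b * ‖u‖ ^ 2 * ⟪u, w⟫ - Ψ' u w := by
      rw [huniq]
      simp [ContinuousLinearMap.sub_apply, ContinuousLinearMap.add_apply,
        ContinuousLinearMap.smul_apply, innerSL_apply_apply]
      ring
    rw [h1, ← hA u w, inner_sub_left]; ring
  have keyCLM : Φ' u = c • innerSL ℝ (u - A u) := by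
    ext w
    rw [ContinuousLinearMap.smul_apply, innerSL_apply_apply, smul_eq_mul]
    exact key w
  have hval : Φ' u (u - A u) = c * ‖u - A u‖ ^ 2 := by
    rw [key, real_inner_self_eq_norm_sq]
  refine ⟨hval, ?_, ?_, ?_⟩
  · rw [hval]
    have hac : a ≤ c := by nlinarith [sq_nonneg ‖u‖]
    exact mul_le_mul_of_nonneg_right hac (sq_nonneg _)
  · rw [keyCLM]
    refine le_of_eq ?_
    rw [norm_smul (α := ℝ) (β := Y →L[ℝ] ℝ) c (innerSL ℝ (u - A u)), Real.norm_eq_abs,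
      abs_of_nonneg hc0, innerSL_apply_norm]
  · have h1 : c ≤ (a + b) * (1 + ‖u‖ ^ 2) := by nlinarith [sq_nonneg ‖u‖]
    exact mul_le_mul_of_nonneg_right h1 (norm_nonneg _)
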